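/- The function f(φ) = sin φ / (π·√(sin²φ − cos²b)), defined on (π/2 − b, π/2 + b) for inclination b ∈ (0, π/2], is a probability density function: it is nonnegative and its integral over (π/2 − b, π/2 + b) equals 1. -/

import Mathlib

open Real MeasureTheory

theorem polar_angle_density_is_pdf (b : ℝ) (hb : b ∈ Set.Ioc 0 (π / 2)) :
    (∀ φ ∈ Set.Ioo (π / 2 - b) (π / 2 + b),
        0 ≤ Real.sin φ / (π * Real.sqrt (Real.sin φ ^ 2 - Real.cos b ^ 2))) ∧
      ∫ φ in Set.Ioo (π / 2 - b) (π / 2 + b),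
          Real.sin φ / (π * Real.sqrt (Real.sin φ ^ 2 - Real.cos b ^ 2)) = 1 := by
  obtain ⟨hb0, hb2⟩ := hb
  have hpi : (0:ℝ) < π := Real.pi_pos
  have hsb : 0 < Real.sin b := Real.sin_pos_of_pos_of_lt_pi hb0 (by linarith)
  have hnonneg : ∀ φ ∈ Set.Ioo (π / 2 - b) (π / 2 + b),
      0 ≤ Real.sin φ / (π * Real.sqrt (Real.sin φ ^ 2 - Real.cos b ^ 2)) := by
    intro φ hφ
    exact div_nonneg
      (Real.sin_nonneg_of_nonneg_of_le_pi (by linarith [hφ.1]) (by linarith [hφ.2]))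
      (mul_nonneg hpi.le (Real.sqrt_nonneg _))
  refine ⟨hnonneg, ?_⟩
  set F : ℝ → ℝ := fun φ => Real.arcsin (-Real.cos φ / Real.sin b) / π with hFdef
  have hFcont : Continuous F :=
    (Real.continuous_arcsin.comp ((Real.continuous_cos.neg).div_const _)).div_const _
  have hcos_bound : ∀ φ ∈ Set.Ioo (π / 2 - b) (π / 2 + b),
      -Real.sin b < Real.cos φ ∧ Real.cos φ < Real.sin b := by
    intro φ hφ
    constructor
    · have := Real.cos_lt_cos_of_nonneg_of_le_pi (by linarith [hφ.1] : (0:ℝ) ≤ φ)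
        (by linarith : π / 2 + b ≤ π) hφ.2
      rw [show Real.cos (π / 2 + b) = -Real.sin b by rw [Real.cos_add]; simp] at this
      exact this
    · have := Real.cos_lt_cos_of_nonneg_of_le_pi (by linarith : (0:ℝ) ≤ π / 2 - b)
        (by linarith [hφ.2] : φ ≤ π) hφ.1
      rwa [Real.cos_pi_div_two_sub] at this
  have hderiv : ∀ φ ∈ Set.Ioo (π / 2 - b) (π / 2 + b),
      HasDerivAt F (Real.sin φ / (π * Real.sqrt (Real.sin φ ^ 2 - Real.cos b ^ 2))) φ := by
    intro φ hφ
    obtain ⟨h1, h2⟩ := hcos_bound φ hφ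
    have hx1 : -Real.cos φ / Real.sin b ≠ -1 := by
      intro h; rw [div_eq_iff (ne_of_gt hsb)] at h; nlinarith
    have hx2 : -Real.cos φ / Real.sin b ≠ 1 := by
      intro h; rw [div_eq_iff (ne_of_gt hsb)] at h; nlinarith
    have hg : HasDerivAt (fun φ => -Real.cos φ / Real.sin b) (Real.sin φ / Real.sin b) φ := by
      have := ((Real.hasDerivAt_cos φ).neg).div_const (Real.sin b)
      simpa using this
    have hD := ((Real.hasDerivAt_arcsin hx1 hx2).comp φ hg).div_const π
    refine hD.congr_deriv ?_
    have hkey : Real.sin φ ^ 2 - Real.cos b ^ 2 = Real.sin b ^ 2 - Real.cos φ ^ 2 := by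
      have h1 := Real.sin_sq_add_cos_sq φ
      have h2 := Real.sin_sq_add_cos_sq b
      nlinarith
    have hpos : 0 < Real.sin b ^ 2 - Real.cos φ ^ 2 := by nlinarith
    have h1sub : 1 - (-Real.cos φ / Real.sin b) ^ 2
        = (Real.sin b ^ 2 - Real.cos φ ^ 2) / Real.sin b ^ 2 := by
      field_simp
    have hsqrt_pos : 0 < Real.sqrt (Real.sin b ^ 2 - Real.cos φ ^ 2) := Real.sqrt_pos.mpr hpos
    rw [h1sub, Real.sqrt_div hpos.le, Real.sqrt_sq hsb.le, hkey]
    field_simp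
  have hle : π / 2 - b ≤ π / 2 + b := by linarith
  have hint : IntervalIntegrable
      (fun φ => Real.sin φ / (π * Real.sqrt (Real.sin φ ^ 2 - Real.cos b ^ 2)))
      volume (π / 2 - b) (π / 2 + b) := by
    apply intervalIntegral.intervalIntegrable_deriv_of_nonneg hFcont.continuousOn
    · intro x hx
      rw [min_eq_left hle, max_eq_right hle] at hx
      exact hderiv x hx
    · intro x hx
      rw [min_eq_left hle, max_eq_right hle] at hx
      exact hnonneg x hx
  have hFTC := intervalIntegral.integral_eq_sub_of_hasDerivAt_of_le hle
    hFcont.continuousOn hderiv hint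
  rw [← MeasureTheory.integral_Ioc_eq_integral_Ioo, ← intervalIntegral.integral_of_le hle,
    hFTC]
  have e1 : F (π / 2 + b) = 1 / 2 := by
    show Real.arcsin (-Real.cos (π / 2 + b) / Real.sin b) / π = 1 / 2
    rw [show Real.cos (π / 2 + b) = -Real.sin b by rw [Real.cos_add]; simp,
      neg_neg, div_self (ne_of_gt hsb), Real.arcsin_one]
    field_simp
  have e2 : F (π / 2 - b) = -(1 / 2) := by
    show Real.arcsin (-Real.cos (π / 2 - b) / Real.sin b) / π = -(1 / 2)
    rw [Real.cos_pi_div_two_sub, neg_div, div_self (ne_of_gt hsb), Real.arcsin_neg,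
      Real.arcsin_one]
    field_simp
  rw [e1, e2]; ring
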